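/- Let s ≥ 2, t ≥ 2 and m ≥ 1 be integers and let n = sm - 1. Then the family F = {X ⊆ [n] : |X| ≥ m-1} of all subsets of [n] of size at least m-1 is K_{s×t}-free. Consequently vex(n, K_{s×t}) ≥ Σ_{i=m-1}^{n} C(n,i). -/

import Mathlib

open Finset

/-- The family `F` of subsets of `[n]` contains a copy of the complete `s`-partite
graph `K_{s×t}` (all parts of size `t`) in the Kneser cube: there are `s·t` pairwise
distinct members `A j i ∈ F` such that sets belonging to different groups `j ≠ j'`
are disjoint. -/
def containsKst (n s t : ℕ) (F : Finset (Finset (Fin n))) : Prop :=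
  ∃ A : Fin s → Fin t → Finset (Fin n),
    (∀ j i, A j i ∈ F) ∧
    Function.Injective (fun p : Fin s × Fin t => A p.1 p.2) ∧
    ∀ j j' : Fin s, j ≠ j' → ∀ i i' : Fin t, Disjoint (A j i) (A j' i')

/-- `vexKst n s t` : the maximum size of a `K_{s×t}`-free family of subsets of `[n]`. -/
noncomputable def vexKst (n s t : ℕ) : ℕ :=
  sSup {k | ∃ F : Finset (Finset (Fin n)), ¬ containsKst n s t F ∧ F.card = k}

/-- for `n = sm - 1`, the family of all subsets of `[n]` of size at least
`m-1` is `K_{s×t}`-free, hence `vex(n, K_{s×t}) ≥ Σ_{i=m-1}^n C(n,i)`. -/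
theorem stmt0 (s t m n : ℕ) (hs : 2 ≤ s) (ht : 2 ≤ t) (hm : 1 ≤ m)
    (hn : n = s * m - 1) :
    ¬ containsKst n s t (univ.filter fun X : Finset (Fin n) => m - 1 ≤ X.card) ∧
      ∑ i ∈ Finset.Icc (m - 1) n, n.choose i ≤ vexKst n s t := by
  have key : ¬ containsKst n s t (univ.filter fun X : Finset (Fin n) => m - 1 ≤ X.card) := by
    rintro ⟨A, hmem, hinj, hdisj⟩
    have hcard : ∀ j i, m - 1 ≤ (A j i).card := fun j i => (mem_filter.mp (hmem j i)).2
    set i0 : Fin t := ⟨0, by omega⟩ with hi0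
    set i1 : Fin t := ⟨1, by omega⟩ with hi1
    set B : Fin s → Finset (Fin n) := fun j => A j i0 ∪ A j i1 with hB
    have hBcard : ∀ j, m ≤ (B j).card := by
      intro j
      have hne : A j i0 ≠ A j i1 := by
        intro h
        have := hinj (a₁ := (j, i0)) (a₂ := (j, i1)) h
        simp [hi0, hi1, Prod.ext_iff, Fin.ext_iff] at this
      by_contra h
      push_neg at h
      have h1 : (B j).card ≤ m - 1 := by omega
      have e0 : A j i0 = B j :=
        eq_of_subset_of_card_le subset_union_left (le_trans h1 (hcard j i0))
      have e1 : A j i1 = B j :=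
        eq_of_subset_of_card_le subset_union_right (le_trans h1 (hcard j i1))
      exact hne (e0.trans e1.symm)
    have hBdisj : ∀ j j' : Fin s, j ≠ j' → Disjoint (B j) (B j') := by
      intro j j' hjj
      simp only [hB, disjoint_union_left, disjoint_union_right]
      exact ⟨⟨hdisj j j' hjj i0 i0, hdisj j j' hjj i1 i0⟩,
        ⟨hdisj j j' hjj i0 i1, hdisj j j' hjj i1 i1⟩⟩
    have hsum : ∑ j : Fin s, (B j).card ≤ n := by
      rw [← Finset.card_biUnion (fun j _ j' _ h => hBdisj j j' h)]
      calc (univ.biUnion B).card ≤ (univ : Finset (Fin n)).card :=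
            card_le_card (subset_univ _)
        _ = n := by simp
    have hsm : s * m ≤ ∑ j : Fin s, (B j).card := by
      calc s * m = ∑ _j : Fin s, m := by simp [mul_comm]
        _ ≤ _ := Finset.sum_le_sum fun j _ => hBcard j
    have h2 : 2 * 1 ≤ s * m := Nat.mul_le_mul hs hm
    omega
  refine ⟨key, ?_⟩
  have hle : ∑ i ∈ Finset.Icc (m - 1) n, n.choose i ≤
      (univ.filter fun X : Finset (Fin n) => m - 1 ≤ X.card).card := by
    have hdisj : ∀ i ∈ Finset.Icc (m - 1) n, ∀ i' ∈ Finset.Icc (m - 1) n, i ≠ i' →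
        Disjoint (Finset.powersetCard i (univ : Finset (Fin n)))
          (Finset.powersetCard i' (univ : Finset (Fin n))) := by
      intro i _ i' _ hii
      rw [Finset.disjoint_left]
      intro X hX hX'
      rw [Finset.mem_powersetCard_univ] at hX hX'
      exact hii (hX ▸ hX')
    calc ∑ i ∈ Finset.Icc (m - 1) n, n.choose i
        = ∑ i ∈ Finset.Icc (m - 1) n,
            (Finset.powersetCard i (univ : Finset (Fin n))).card := by
          refine Finset.sum_congr rfl fun i _ => ?_
          rw [Finset.card_powersetCard, card_univ, Fintype.card_fin]
      _ = ((Finset.Icc (m - 1) n).biUnion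
            (fun i => Finset.powersetCard i (univ : Finset (Fin n)))).card :=
          (Finset.card_biUnion hdisj).symm
      _ ≤ _ := by
          apply card_le_card
          intro X hX
          rw [Finset.mem_biUnion] at hX
          obtain ⟨i, hi, hXi⟩ := hX
          rw [Finset.mem_powersetCard_univ] at hXi
          rw [Finset.mem_Icc] at hi
          simp only [mem_filter, mem_univ, true_and]
          omega
  refine le_trans hle ?_
  apply le_csSup
  · refine ⟨Fintype.card (Finset (Fin n)), ?_⟩
    rintro k ⟨F, -, rfl⟩
    exact F.card_le_univ.trans (le_of_eq card_univ)
  · exact ⟨_, key, rfl⟩
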